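/- Soundness and completeness of AX↓_det for the class M↓_det: an L-formula is a theorem of AX↓_det if and only if it is true in every causal simulation model whose machine is deterministic and halts on every input tape under every intervention. -/

import Mathlib

set_option maxHeartbeats 1000000

namespace CausalSim

/-! ### Propositional syntax -/

/-- Propositional formulas over atoms `X_i`. -/
inductive PropForm : Type
  | atom : ℕ → PropForm
  | neg : PropForm → PropForm
  | and : PropForm → PropForm → PropForm
  | or : PropForm → PropForm → PropForm
  deriving DecidableEq

def PropForm.imp (φ ψ : PropForm) : PropForm := .or (.neg φ) ψ

/-- A fixed propositional contradiction. -/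
def PropForm.bot : PropForm := .and (.atom 0) (.neg (.atom 0))

/-- Its negation, a fixed tautology. -/
def PropForm.top : PropForm := PropForm.neg PropForm.bot

def PropForm.eval (v : ℕ → Bool) : PropForm → Bool
  | .atom i => v i
  | .neg φ => !(φ.eval v)
  | .and φ ψ => φ.eval v && ψ.eval v
  | .or φ ψ => φ.eval v || ψ.eval v

/-- `L_int`: ordered conjunctions of literals over distinct atoms, represented by
the list of literals `(index, polarity)`, with strictly increasing indices.
The empty list represents the empty intervention `⊤`. -/
abbrev Lint : Type := {l : List (ℕ × Bool) // l.Chain' fun p q => p.1 < q.1}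

instance : DecidableEq Lint := fun a b =>
  decidable_of_iff (a.1 = b.1) Subtype.ext_iff.symm

def Lint.top : Lint := ⟨[], List.isChain_nil⟩

/-- The partial assignment (intervention) specified by `α ∈ L_int`. -/
def Lint.itv (α : Lint) : ℕ → Option Bool :=
  fun i => (α.1.find? fun p => p.1 == i).map Prod.snd

def PropForm.lit (p : ℕ × Bool) : PropForm :=
  if p.2 then .atom p.1 else .neg (.atom p.1)

/-- `α ∈ L_int` regarded as a propositional formula (conjunction of its literals;
`⊤` for the empty intervention). -/
def Lint.toProp (α : Lint) : PropForm :=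
  match α.1 with
  | [] => PropForm.top
  | p :: rest => rest.foldl (fun acc q => .and acc (.lit q)) (.lit p)

/-! ### The language `L` -/

/-- The causal simulation language `L`: propositional formulas over the atoms
`X ∪ L_cond`, where a conditional `[α]β` has antecedent `α ∈ L_int` and
consequent `β ∈ L_prop`. -/
inductive LForm : Type
  | atom : ℕ → LForm
  | cond : Lint → PropForm → LForm
  | neg : LForm → LForm
  | and : LForm → LForm → LForm
  | or : LForm → LForm → LForm

def LForm.imp (φ ψ : LForm) : LForm := .or (.neg φ) ψ

def LForm.iff (φ ψ : LForm) : LForm := .and (φ.imp ψ) (ψ.imp φ)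

/-- `⟨α⟩β`, an abbreviation for `¬[α]¬β`. -/
def LForm.dia (α : Lint) (β : PropForm) : LForm := .neg (.cond α (.neg β))

/-- The embedding of `L_prop` into `L`. -/
def PropForm.toL : PropForm → LForm
  | .atom i => .atom i
  | .neg φ => .neg φ.toL
  | .and φ ψ => .and φ.toL ψ.toL
  | .or φ ψ => .or φ.toL ψ.toL

/-- Evaluation of an `L`-formula treating the elements of `X ∪ L_cond` as
propositional atoms: `v` assigns values to the `X`-atoms and `w` to the
conditional atoms. -/
def LForm.evalA (v : ℕ → Bool) (w : Lint → PropForm → Bool) : LForm → Bool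
  | .atom i => v i
  | .cond α β => w α β
  | .neg φ => !(φ.evalA v w)
  | .and φ ψ => φ.evalA v w && ψ.evalA v w
  | .or φ ψ => φ.evalA v w || ψ.evalA v w

/-- Substitution instances of propositional tautologies over the atoms `X ∪ L_cond`. -/
def Tautology (φ : LForm) : Prop := ∀ v w, φ.evalA v w = true

/-! ### Turing machines over a Boolean variable tape, and interventions -/

/-- A transition rule `((q, read), (q', write, moveRight))`. -/
abbrev Rule : Type := (ℕ × Bool) × (ℕ × Bool × Bool)

/-- A (possibly non-deterministic) Turing machine, given by its finite list of
transition rules; the initial control state is `0`, and the machine halts in a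
configuration to which no rule applies. -/
abbrev Machine : Type := List Rule

/-- A configuration: control state, head position, and tape contents. -/
structure Cfg where
  q : ℕ
  pos : ℕ
  tape : ℕ → Bool

/-- The initial tape: the intervention `itv` first sets the intervened variables. -/
def initTape (itv : ℕ → Option Bool) (x : ℕ → Bool) : ℕ → Bool :=
  fun i => (itv i).getD (x i)

/-- Writing under an intervention: writes to intervened variables are ignored. -/
def writeTape (itv : ℕ → Option Bool) (t : ℕ → Bool) (pos : ℕ) (b : Bool) : ℕ → Bool :=
  if itv pos = none then Function.update t pos b else t

def movePos (p : ℕ) (right : Bool) : ℕ := if right then p + 1 else p - 1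

/-- One step of the intervened machine `I_itv(T)`. -/
def MStep (T : Machine) (itv : ℕ → Option Bool) (c c' : Cfg) : Prop :=
  ∃ r ∈ T, r.1 = (c.q, c.tape c.pos) ∧
    c' = ⟨r.2.1, movePos c.pos r.2.2.2, writeTape itv c.tape c.pos r.2.2.1⟩

/-- A halted configuration: no rule applies. -/
def Halted (T : Machine) (c : Cfg) : Prop := ∀ r ∈ T, r.1 ≠ (c.q, c.tape c.pos)

/-- The set of result tapes of halting executions of `I_itv(T)` on input `x`. -/
def Outputs (T : Machine) (itv : ℕ → Option Bool) (x : ℕ → Bool) : Set (ℕ → Bool) :=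
  {y | ∃ c : Cfg, Relation.ReflTransGen (MStep T itv) ⟨0, 0, initTape itv x⟩ c ∧
        Halted T c ∧ c.tape = y}

/-- Deterministic machines: at most one rule per (state, read symbol). -/
def Machine.Det (T : Machine) : Prop := ∀ r₁ ∈ T, ∀ r₂ ∈ T, r₁.1 = r₂.1 → r₁ = r₂

/-- State descriptions have finite support. -/
def FinSupp (x : ℕ → Bool) : Prop := {i | x i = true}.Finite

/-- Machines with at least one halting execution on every input tape under
every intervention. -/
def Machine.TotalHalting (T : Machine) : Prop :=
  ∀ (α : Lint) (x : ℕ → Bool), FinSupp x → (Outputs T α.itv x).Nonempty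

/-- Finite state machines: over all inputs and interventions, the machine reads and
writes only boundedly many tape variables. -/
def Machine.FiniteState (T : Machine) : Prop :=
  ∃ B : ℕ, ∀ (α : Lint) (x : ℕ → Bool), FinSupp x →
    ∀ c : Cfg, Relation.ReflTransGen (MStep T α.itv) ⟨0, 0, initTape α.itv x⟩ c → c.pos < B

/-! ### Causal simulation models and satisfaction -/

/-- A causal simulation model: a machine together with a state description with
finite support. -/
structure CSM where
  T : Machine
  x : ℕ → Bool
  fin : FinSupp x

/-- Satisfaction, generically in the map sending each intervention `α ∈ L_int`
to the set of output tapes of the corresponding halting executions. -/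
def SatGen (O : Lint → Set (ℕ → Bool)) (x : ℕ → Bool) : LForm → Prop
  | .atom i => x i = true
  | .cond α β => ∀ y ∈ O α, β.eval y = true
  | .neg φ => ¬ SatGen O x φ
  | .and φ ψ => SatGen O x φ ∧ SatGen O x ψ
  | .or φ ψ => SatGen O x φ ∨ SatGen O x ψ

/-- `(T, x) ⊨ φ`. -/
def CSM.Sat (M : CSM) (φ : LForm) : Prop :=
  SatGen (fun α => Outputs M.T α.itv M.x) M.x φ

/-- The class `M` of all causal simulation models. -/
def inM (_ : CSM) : Prop := True

/-- The class `M_det`. -/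
def inMdet (M : CSM) : Prop := M.T.Det

/-- The class `M↓`. -/
def inMhalt (M : CSM) : Prop := M.T.TotalHalting

/-- The class `M↓_det`. -/
def inMdethalt (M : CSM) : Prop := M.T.Det ∧ M.T.TotalHalting

/-! ### The axiomatic systems -/

/-- Derivability from: propositional tautologies (over atoms `X ∪ L_cond`),
the axioms `R` and `K`, extra axioms `extra`, modus ponens, and the rule `RW`. -/
inductive Deriv (extra : LForm → Prop) : LForm → Prop
  | taut {φ} : Tautology φ → Deriv extra φ
  | extra {φ} : extra φ → Deriv extra φ
  | axR (α : Lint) : Deriv extra (.cond α α.toProp)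
  | axK (α : Lint) (β γ : PropForm) :
      Deriv extra ((LForm.cond α (β.imp γ)).imp ((LForm.cond α β).imp (.cond α γ)))
  | mp {φ ψ} : Deriv extra (φ.imp ψ) → Deriv extra φ → Deriv extra ψ
  | rw (α : Lint) {β β' : PropForm} :
      Deriv extra (β.imp β').toL → Deriv extra ((LForm.cond α β).imp (.cond α β'))

/-- Instances of axiom `F : ⟨α⟩β → [α]β`. -/
def axF (φ : LForm) : Prop :=
  ∃ (α : Lint) (β : PropForm), φ = (LForm.dia α β).imp (.cond α β)

/-- Instances of axiom `D : [α]β → ⟨α⟩β`. -/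
def axD (φ : LForm) : Prop :=
  ∃ (α : Lint) (β : PropForm), φ = (LForm.cond α β).imp (LForm.dia α β)

def AX : LForm → Prop := Deriv fun _ => False
def AXdet : LForm → Prop := Deriv axF
def AXhalt : LForm → Prop := Deriv axD
def AXdethalt : LForm → Prop := Deriv fun φ => axF φ ∨ axD φ

end CausalSim
namespace CausalSim

/-! ### Normal form clauses and selection functions -/

def bigAndL : List LForm → LForm
  | [] => PropForm.top.toL
  | φ :: rest => rest.foldl .and φ

def bigOrL : List LForm → LForm
  | [] => PropForm.bot.toL
  | φ :: rest => rest.foldl .or φ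

def bigOrP : List PropForm → PropForm
  | [] => PropForm.bot
  | φ :: rest => rest.foldl .or φ

/-- The data of a conjunctive clause
`π ∧ ⋀_{i∈I}([α_i] ⋁_{j∈J_i} β_{i,j}) ∧ ⋀_{k∈K} ⟨α_k⟩ β_k`. -/
structure Clause where
  pi : PropForm
  boxes : List (Lint × List Lint)
  dias : List (Lint × Lint)

/-- The `α_i` (for distinct `i ∈ I`) are pairwise distinct. -/
def Clause.wf (δ : Clause) : Prop := (δ.boxes.map Prod.fst).Pairwise (· ≠ ·)

def Clause.toLForm (δ : Clause) : LForm :=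
  .and δ.pi.toL (.and
    (bigAndL (δ.boxes.map fun p => .cond p.1 (bigOrP (p.2.map Lint.toProp))))
    (bigAndL (δ.dias.map fun p => LForm.dia p.1 p.2.toProp)))

/-- `S_δ`: the antecedents occurring in the clause `δ`. -/
def Clause.ants (δ : Clause) : List Lint := δ.boxes.map Prod.fst ++ δ.dias.map Prod.fst

/-- A list of literals is propositionally consistent. -/
def LitsConsistent (l : List (ℕ × Bool)) : Prop :=
  ∀ i, ¬((i, true) ∈ l ∧ (i, false) ∈ l)

/-- `γ` is the `L_int`-equivalent of the conjunction of the literals `l`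
(reordering and deletion of repeated literals). -/
def Lint.IsEquivOf (γ : Lint) (l : List (ℕ × Bool)) : Prop := γ.1.toFinset = l.toFinset

/-- `f` is a selection function for the clause `δ`. -/
def IsSelection (δ : Clause) (f : Lint → List Lint) : Prop :=
  (∀ α ∈ δ.ants, α ∉ δ.dias.map Prod.fst → f α = []) ∧
  (∀ α ∈ δ.dias.map Prod.fst, ∃ sel : Lint × Lint → Lint,
    f α = (δ.dias.filter fun p => decide (p.1 = α)).map sel ∧
    ∀ p ∈ δ.dias, p.1 = α →
      (∀ J, (α, J) ∈ δ.boxes →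
        ∃ j ∈ J, LitsConsistent (α.1 ++ p.2.1 ++ j.1) ∧
          (sel p).IsEquivOf (α.1 ++ p.2.1 ++ j.1)) ∧
      (α ∉ δ.boxes.map Prod.fst →
        LitsConsistent (α.1 ++ p.2.1) ∧ (sel p).IsEquivOf (α.1 ++ p.2.1)))

/-! ### Sizes -/

def PropForm.size : PropForm → ℕ
  | .atom i => i + 1
  | .neg φ => φ.size + 1
  | .and φ ψ => φ.size + ψ.size + 1
  | .or φ ψ => φ.size + ψ.size + 1

def Lint.size (α : Lint) : ℕ := (α.1.map fun p => p.1 + 1).sum + 1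

/-- `|φ|`, the number of symbols of `φ` (an occurrence of the atom `X_i`
contributing `i + 1` symbols). -/
def LForm.size : LForm → ℕ
  | .atom i => i + 1
  | .cond α β => α.size + β.size + 1
  | .neg φ => φ.size + 1
  | .and φ ψ => φ.size + ψ.size + 1
  | .or φ ψ => φ.size + ψ.size + 1

def PropForm.maxAtom : PropForm → ℕ
  | .atom i => i
  | .neg φ => φ.maxAtom
  | .and φ ψ => max φ.maxAtom ψ.maxAtom
  | .or φ ψ => max φ.maxAtom ψ.maxAtom

def Lint.maxAtom (α : Lint) : ℕ := (α.1.map Prod.fst).foldr max 0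

/-- `N`: the largest index of an atom occurring in `φ`. -/
def LForm.maxAtom : LForm → ℕ
  | .atom i => i
  | .cond α β => max α.maxAtom β.maxAtom
  | .neg φ => φ.maxAtom
  | .and φ ψ => max φ.maxAtom ψ.maxAtom
  | .or φ ψ => max φ.maxAtom ψ.maxAtom

/-- `S_φ`: the antecedents of the conditionals occurring in `φ`. -/
def LForm.ants : LForm → List Lint
  | .atom _ => []
  | .cond α _ => [α]
  | .neg φ => φ.ants
  | .and φ ψ => φ.ants ++ ψ.ants
  | .or φ ψ => φ.ants ++ ψ.ants

/-! ### The programming language `PL` -/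

/-- Assignment statements `X_i := c`, `X_i := X_j`, `X_i := !X_j`. -/
inductive BAssign : Type
  | const (i : ℕ) (c : Bool)
  | copy (i j : ℕ)
  | negcopy (i j : ℕ)
  deriving DecidableEq

def BAssign.target : BAssign → ℕ
  | .const i _ => i
  | .copy i _ => i
  | .negcopy i _ => i

def BAssign.maxVar : BAssign → ℕ
  | .const i _ => i
  | .copy i j => max i j
  | .negcopy i j => max i j

/-- Tests `X_i = c`, `X_i = X_j`, `X_i != X_j`, and conjunctions thereof. -/
inductive BTest : Type
  | eqc (i : ℕ) (c : Bool)
  | eqv (i j : ℕ)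
  | nev (i j : ℕ)
  | and (t₁ t₂ : BTest)
  deriving DecidableEq

def BTest.eval (s : ℕ → Bool) : BTest → Bool
  | .eqc i c => s i == c
  | .eqv i j => s i == s j
  | .nev i j => !(s i == s j)
  | .and t₁ t₂ => t₁.eval s && t₂.eval s

def BTest.size : BTest → ℕ
  | .eqc _ _ => 1
  | .eqv _ _ => 1
  | .nev _ _ => 1
  | .and t₁ t₂ => t₁.size + t₂.size + 1

/-- Programs of `PL`: the empty program, assignments, sequencing,
if-then-else, nondeterministic choice, and the unconditional infinite loop. -/
inductive Prog : Type
  | empty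
  | assign (a : BAssign)
  | seq (p q : Prog)
  | ite (c : BTest) (p q : Prog)
  | choose (ps : List Prog)
  | loop

mutual
  /-- The length of a program. -/
  def Prog.size : Prog → ℕ
    | .empty => 1
    | .assign _ => 1
    | .seq p q => p.size + q.size + 1
    | .ite c p q => c.size + p.size + q.size + 1
    | .choose ps => Prog.sizeList ps + 1
    | .loop => 1
  def Prog.sizeList : List Prog → ℕ
    | [] => 0
    | p :: ps => p.size + Prog.sizeList ps
end

/-- The effect of an assignment under an intervention: writes to intervened
variables are ignored. -/
def applyAssign (itv : ℕ → Option Bool) (a : BAssign) (s : ℕ → Bool) : ℕ → Bool :=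
  let v : Bool := match a with
    | .const _ c => c
    | .copy _ j => s j
    | .negcopy _ j => !(s j)
  if itv a.target = none then Function.update s a.target v else s

/-- Big-step semantics of `PL` under an intervention. A `loop`-statement has no
halting execution, and a `choose`-statement executes one of its branches. -/
inductive BigStep (itv : ℕ → Option Bool) : Prog → (ℕ → Bool) → (ℕ → Bool) → Prop
  | empty (s) : BigStep itv .empty s s
  | assign (a s) : BigStep itv (.assign a) s (applyAssign itv a s)
  | seq {p q s t u} : BigStep itv p s t → BigStep itv q t u → BigStep itv (.seq p q) s u
  | iteT {c p q s t} : c.eval s = true → BigStep itv p s t → BigStep itv (.ite c p q) s t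
  | iteF {c p q s t} : c.eval s = false → BigStep itv q s t → BigStep itv (.ite c p q) s t
  | choose {ps p s t} : p ∈ ps → BigStep itv p s t → BigStep itv (.choose ps) s t

/-- The set of result tapes of halting executions of the intervened program. -/
def ProgOutputs (P : Prog) (itv : ℕ → Option Bool) (x : ℕ → Bool) : Set (ℕ → Bool) :=
  {y | BigStep itv P (initTape itv x) y}

/-- Satisfaction `(T_P, x) ⊨ φ` for the machine compiled from the program `P`
(whose executions are those of `P`). -/
def ProgSat (P : Prog) (x : ℕ → Bool) (φ : LForm) : Prop :=
  SatGen (fun α => ProgOutputs P α.itv x) x φ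

end CausalSim
namespace CausalSim

/-! ### The canonical program fragment `PL†_{φ,C}` -/

def seqList : List Prog → Prog
  | [] => .empty
  | p :: ps => .seq p (seqList ps)

/-- Listing 1: `IsIntervened(X_i)` (with offset parameter `N`): performs the
toggle check for `X_i`, records the result in `X_{i+N}`, uses `X_{i+2N}` as a
temporary variable, and leaves `X_i` unchanged. -/
def isIntervened (N i : ℕ) : Prog :=
  seqList [
    .assign (.copy (i + N) i),
    .assign (.negcopy i i),
    .assign (.copy (i + 2 * N) i),
    .ite (.eqv (i + 2 * N) (i + N))
      (.assign (.const (i + N) true)) (.assign (.const (i + N) false)),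
    .assign (.negcopy i i)]

/-- One copy of `IsIntervened(X_i)` for each `1 ≤ i ≤ N`. -/
def isIntervenedAll (N : ℕ) : Prog :=
  seqList ((List.range' 1 N).map (isIntervened N))

/-- Listing 2: `HoldsFromIntervention(α)`: the condition checking that exactly
the variables occurring in `α` are marked as intervened and carry the values
specified by `α`'s literals. -/
def holdsFromItv (N : ℕ) (α : Lint) : BTest :=
  ((List.range' 1 N).map fun i =>
    match α.itv i with
    | some b => BTest.and (.eqc i b) (.eqc (i + N) true)
    | none => BTest.eqc (i + N) false).foldr .and (.eqv 0 0)

/-- A sequence of assignment statements. -/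
def assignSeq (l : List BAssign) : Prog := seqList (l.map Prog.assign)

/-- An admissible assignment sequence: assignments only to (pairwise distinct)
variables `X_i` with `1 ≤ i ≤ N`, mentioning only variables of index `≤ N`. -/
def GoodAssigns (N : ℕ) (l : List BAssign) : Prop :=
  (l.map BAssign.target).Nodup ∧ ∀ a ∈ l, a.maxVar ≤ N ∧ 1 ≤ a.target

/-- The admissible bodies of the `if`-statements of a fragment program:
(a) a `choose`-statement with at most `C·|φ|` branches, each an admissible
assignment sequence; (b) a single admissible assignment sequence; or
(c) a single `loop`-statement — with (a) excluded for the deterministic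
dialects and (c) excluded for the halting dialects. -/
def IfBody (C N sz : ℕ) (allowChoose allowLoop : Bool) (p : Prog) : Prop :=
  (allowChoose = true ∧ ∃ branches : List (List BAssign),
      p = .choose (branches.map assignSeq) ∧ branches.length ≤ C * sz ∧
      ∀ l ∈ branches, GoodAssigns N l) ∨
  (∃ l : List BAssign, p = assignSeq l ∧ GoodAssigns N l) ∨
  (allowLoop = true ∧ p = .loop)

/-- Membership in the fragment `PL†_{φ,C}`: one copy of `IsIntervened(X_i)` for
each `1 ≤ i ≤ N`, followed by at most one `if`-statement with condition
`HoldsFromIntervention(α)` for each antecedent `α` occurring in `φ`, with an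
admissible body. -/
def InFrag (C : ℕ) (φ : LForm) (allowChoose allowLoop : Bool) (P : Prog) : Prop :=
  ∃ ifs : List (Lint × Prog),
    (ifs.map Prod.fst).Nodup ∧
    (∀ q ∈ ifs, q.1 ∈ φ.ants ∧ IfBody C φ.maxAtom φ.size allowChoose allowLoop q.2) ∧
    P = .seq (isIntervenedAll φ.maxAtom)
      (seqList (ifs.map fun q => Prog.ite (holdsFromItv φ.maxAtom q.1) q.2 .empty))

/-! ### Encodings into binary strings -/

def encNat (n : ℕ) : List Bool := List.replicate n true ++ [false]

def encListGen (enc : α → List Bool) (l : List α) : List Bool :=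
  encNat l.length ++ l.flatMap enc

def encLit (p : ℕ × Bool) : List Bool := encNat p.1 ++ [p.2]

def encLint (α : Lint) : List Bool := encListGen encLit α.1

def encProp : PropForm → List Bool
  | .atom i => encNat 0 ++ encNat i
  | .neg φ => encNat 1 ++ encProp φ
  | .and φ ψ => encNat 2 ++ encProp φ ++ encProp ψ
  | .or φ ψ => encNat 3 ++ encProp φ ++ encProp ψ

/-- A standard encoding of `L`-formulas as binary strings. -/
def encLForm : LForm → List Bool
  | .atom i => encNat 0 ++ encNat i
  | .cond α β => encNat 1 ++ encLint α ++ encProp β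
  | .neg φ => encNat 2 ++ encLForm φ
  | .and φ ψ => encNat 3 ++ encLForm φ ++ encLForm ψ
  | .or φ ψ => encNat 4 ++ encLForm φ ++ encLForm ψ

def encAssign : BAssign → List Bool
  | .const i c => encNat 0 ++ encNat i ++ [c]
  | .copy i j => encNat 1 ++ encNat i ++ encNat j
  | .negcopy i j => encNat 2 ++ encNat i ++ encNat j

def encTest : BTest → List Bool
  | .eqc i c => encNat 0 ++ encNat i ++ [c]
  | .eqv i j => encNat 1 ++ encNat i ++ encNat j
  | .nev i j => encNat 2 ++ encNat i ++ encNat j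
  | .and t₁ t₂ => encNat 3 ++ encTest t₁ ++ encTest t₂

mutual
  /-- A standard encoding of programs as binary strings. -/
  def encProg : Prog → List Bool
    | .empty => encNat 0
    | .assign a => encNat 1 ++ encAssign a
    | .seq p q => encNat 2 ++ encProg p ++ encProg q
    | .ite c p q => encNat 3 ++ encTest c ++ encProg p ++ encProg q
    | .choose ps => encNat 4 ++ encNat ps.length ++ encProgList ps
    | .loop => encNat 5
  def encProgList : List Prog → List Bool
    | [] => []
    | p :: ps => encProg p ++ encProgList ps
end

/-! ### Polynomial time, NP, and NP-completeness -/

/-- The identity finite encoding of binary strings. -/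
def listBoolFinEncoding : Computability.Encoding (List Bool) Bool where
  encode := id
  decode := fun l => some l
  decode_encode := fun _ => rfl

/-- `f` is computable in polynomial time (by a Turing machine). -/
def PolyTimeFun (f : List Bool → List Bool) : Prop :=
  Nonempty (Turing.TM2ComputableInPolyTime listBoolFinEncoding.encode listBoolFinEncoding.encode f)

/-- Polynomial-time many-one reducibility. -/
def PolyReducible (L₁ L₂ : List Bool → Prop) : Prop :=
  ∃ f : List Bool → List Bool, PolyTimeFun f ∧ ∀ s, L₁ s ↔ L₂ (f s)

/-- A self-delimiting pairing of binary strings. -/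
def encPairStr (a b : List Bool) : List Bool := encNat a.length ++ a ++ b

/-- The class NP, via polynomial-time verifiers of polynomial-length certificates. -/
def InNP (L : List Bool → Prop) : Prop :=
  ∃ (V : List Bool → Bool) (p : Polynomial ℕ),
    PolyTimeFun (fun s => [V s]) ∧
    ∀ s, L s ↔ ∃ w : List Bool, w.length ≤ p.eval s.length ∧ V (encPairStr s w) = true

/-- NP-completeness with respect to polynomial-time many-one reductions. -/
def NPComplete (L : List Bool → Prop) : Prop :=
  InNP L ∧ ∀ L' : List Bool → Prop, InNP L' → PolyReducible L' L

/-- The language Sim-Sat for a class of models: encodings of `L`-formulas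
satisfied by some model in the class. -/
def SimSatLang (cls : CSM → Prop) : List Bool → Prop :=
  fun s => ∃ φ : LForm, s = encLForm φ ∧ ∃ M : CSM, cls M ∧ M.Sat φ

/-! ### Miscellaneous helpers -/

/-- The state description with support the list `xs`. -/
def stateOf (xs : List ℕ) : ℕ → Bool := fun i => decide (i ∈ xs)

theorem finSupp_stateOf (xs : List ℕ) : FinSupp (stateOf xs) := by
  apply Set.Finite.subset (List.finite_toSet xs)
  intro i hi
  simpa [stateOf] using hi

/-- The model given by a machine and (the support of) a state description. -/
def csmOf (T : Machine) (xs : List ℕ) : CSM := ⟨T, stateOf xs, finSupp_stateOf xs⟩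

/-- The singleton intervention `X_n := 1`. -/
def lintSingle (n : ℕ) : Lint := ⟨[(n, true)], List.isChain_singleton _⟩

/-- The set `Ω` of the non-compactness proposition, for `f : ℕ → ℕ`. -/
def Omega (f : ℕ → ℕ) : Set LForm :=
  {ψ | ∃ n, ψ = LForm.neg (.atom n)} ∪
  {ψ | ∃ n, ψ = LForm.dia (lintSingle n) (.atom (f n))} ∪
  {ψ | ∃ n m, m ≠ n ∧ m ≠ f n ∧ ψ = LForm.cond (lintSingle n) (.neg (.atom m))}

end CausalSim

namespace CausalSim


/-! ### Auxiliary lemmas for the proof -/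

/-- The conditional atoms occurring in a formula. -/
def LForm.conds : LForm → List (Lint × PropForm)
  | .atom _ => []
  | .cond α β => [(α, β)]
  | .neg φ => φ.conds
  | .and φ ψ => φ.conds ++ ψ.conds
  | .or φ ψ => φ.conds ++ ψ.conds

lemma mem_conds_ants {φ : LForm} {q : Lint × PropForm} (h : q ∈ φ.conds) :
    q.1 ∈ φ.ants := by
  induction φ with
  | atom i => simp [LForm.conds] at h
  | cond α β => simp [LForm.conds] at h; simp [h, LForm.ants]
  | neg ψ ih => exact ih h
  | and ψ χ ih1 ih2 =>
      simp [LForm.conds] at h; simp [LForm.ants]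
      rcases h with h | h
      · exact Or.inl (ih1 h)
      · exact Or.inr (ih2 h)
  | or ψ χ ih1 ih2 =>
      simp [LForm.conds] at h; simp [LForm.ants]
      rcases h with h | h
      · exact Or.inl (ih1 h)
      · exact Or.inr (ih2 h)

lemma mem_conds_maxAtom {φ : LForm} {q : Lint × PropForm} (h : q ∈ φ.conds) :
    q.1.maxAtom ≤ φ.maxAtom ∧ q.2.maxAtom ≤ φ.maxAtom := by
  induction φ with
  | atom i => simp [LForm.conds] at h
  | cond α β =>
      simp [LForm.conds] at h
      subst h; constructor <;> simp [LForm.maxAtom]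
  | neg ψ ih => exact ih h
  | and ψ χ ih1 ih2 =>
      simp [LForm.conds] at h
      rcases h with h | h
      · exact ⟨le_trans (ih1 h).1 (le_max_left _ _), le_trans (ih1 h).2 (le_max_left _ _)⟩
      · exact ⟨le_trans (ih2 h).1 (le_max_right _ _), le_trans (ih2 h).2 (le_max_right _ _)⟩
  | or ψ χ ih1 ih2 =>
      simp [LForm.conds] at h
      rcases h with h | h
      · exact ⟨le_trans (ih1 h).1 (le_max_left _ _), le_trans (ih1 h).2 (le_max_left _ _)⟩
      · exact ⟨le_trans (ih2 h).1 (le_max_right _ _), le_trans (ih2 h).2 (le_max_right _ _)⟩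

lemma PropForm.eval_congr {p : PropForm} {v v' : ℕ → Bool}
    (h : ∀ i ≤ p.maxAtom, v i = v' i) : p.eval v = p.eval v' := by
  induction p with
  | atom i => exact h i le_rfl
  | neg q ih => simp [PropForm.eval, ih h]
  | and q r ih1 ih2 =>
      simp only [PropForm.eval]
      rw [ih1 (fun i hi => h i (le_trans hi (le_max_left _ _))),
        ih2 (fun i hi => h i (le_trans hi (le_max_right _ _)))]
  | or q r ih1 ih2 =>
      simp only [PropForm.eval]
      rw [ih1 (fun i hi => h i (le_trans hi (le_max_left _ _))),
        ih2 (fun i hi => h i (le_trans hi (le_max_right _ _)))]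

lemma LForm.evalA_congr {φ : LForm} {v v' : ℕ → Bool} {w w' : Lint → PropForm → Bool}
    (hv : ∀ i ≤ φ.maxAtom, v i = v' i)
    (hw : ∀ q ∈ φ.conds, w q.1 q.2 = w' q.1 q.2) :
    φ.evalA v w = φ.evalA v' w' := by
  induction φ with
  | atom i => exact hv i le_rfl
  | cond α β => exact hw (α, β) (by simp [LForm.conds])
  | neg ψ ih => simp [LForm.evalA, ih hv hw]
  | and ψ χ ih1 ih2 =>
      simp only [LForm.evalA]
      rw [ih1 (fun i hi => hv i (le_trans hi (le_max_left _ _)))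
          (fun q hq => hw q (by simp [LForm.conds]; exact Or.inl hq)),
        ih2 (fun i hi => hv i (le_trans hi (le_max_right _ _)))
          (fun q hq => hw q (by simp [LForm.conds]; exact Or.inr hq))]
  | or ψ χ ih1 ih2 =>
      simp only [LForm.evalA]
      rw [ih1 (fun i hi => hv i (le_trans hi (le_max_left _ _)))
          (fun q hq => hw q (by simp [LForm.conds]; exact Or.inl hq)),
        ih2 (fun i hi => hv i (le_trans hi (le_max_right _ _)))
          (fun q hq => hw q (by simp [LForm.conds]; exact Or.inr hq))]

lemma PropForm.toL_evalA (p : PropForm) (v : ℕ → Bool) (w : Lint → PropForm → Bool) :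
    p.toL.evalA v w = p.eval v := by
  induction p with
  | atom i => rfl
  | neg q ih => simp [PropForm.toL, LForm.evalA, PropForm.eval, ih]
  | and q r ih1 ih2 => simp [PropForm.toL, LForm.evalA, PropForm.eval, ih1, ih2]
  | or q r ih1 ih2 => simp [PropForm.toL, LForm.evalA, PropForm.eval, ih1, ih2]

open Classical in
lemma satGen_iff (O : Lint → Set (ℕ → Bool)) (x : ℕ → Bool) (φ : LForm) :
    SatGen O x φ ↔ φ.evalA x (fun α β => decide (∀ y ∈ O α, β.eval y = true)) = true := by
  induction φ with
  | atom i => simp [SatGen, LForm.evalA]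
  | cond α β => simp [SatGen, LForm.evalA]
  | neg ψ ih => simp [SatGen, LForm.evalA, ih]
  | and ψ χ ih1 ih2 => simp [SatGen, LForm.evalA, ih1, ih2]
  | or ψ χ ih1 ih2 => simp [SatGen, LForm.evalA, ih1, ih2]

lemma PropForm.lit_eval (q : ℕ × Bool) (v : ℕ → Bool) :
    (PropForm.lit q).eval v = (v q.1 == q.2) := by
  rcases q with ⟨i, b⟩
  cases b <;> cases h : v i <;> simp [PropForm.lit, PropForm.eval, h]

lemma PropForm.top_eval (v : ℕ → Bool) : PropForm.top.eval v = true := by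
  cases h : v 0 <;> simp [PropForm.top, PropForm.bot, PropForm.eval, h]

lemma foldl_and_eval (v : ℕ → Bool) (l : List (ℕ × Bool)) (acc : PropForm) :
    (l.foldl (fun acc q => .and acc (.lit q)) acc).eval v =
      (acc.eval v && l.all fun q => (PropForm.lit q).eval v) := by
  induction l generalizing acc with
  | nil => simp
  | cons q l ih => simp [ih, PropForm.eval, Bool.and_assoc]

lemma toProp_eval_iff (α : Lint) (v : ℕ → Bool) :
    α.toProp.eval v = true ↔ ∀ q ∈ α.1, v q.1 = q.2 := by
  rcases α with ⟨l, hl⟩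
  match l with
  | [] => simp [Lint.toProp, PropForm.top_eval]
  | q :: rest =>
      simp only [Lint.toProp, foldl_and_eval, Bool.and_eq_true, List.all_eq_true,
        PropForm.lit_eval, beq_iff_eq, List.mem_cons]
      constructor
      · rintro ⟨h1, h2⟩ p (rfl | hp)
        · exact h1
        · exact h2 p hp
      · intro h
        exact ⟨h q (Or.inl rfl), fun p hp => h p (Or.inr hp)⟩

/-! ### `Lint.itv` facts -/

instance : IsTrans (ℕ × Bool) (fun p q => p.1 < q.1) := ⟨fun _ _ _ => lt_trans⟩

instance : IsAntisymm (ℕ × Bool) (fun p q => p.1 < q.1) :=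
  ⟨fun _ _ h1 h2 => absurd (lt_trans h1 h2) (lt_irrefl _)⟩

lemma lint_pairwise (α : Lint) : α.1.Pairwise (fun p q => p.1 < q.1) :=
  (List.isChain_iff_pairwise).mp α.2

lemma find_key {l : List (ℕ × Bool)} (hp : l.Pairwise (fun p q => p.1 < q.1))
    {i : ℕ} {b : Bool} (hm : (i, b) ∈ l) :
    (l.find? fun p => p.1 == i) = some (i, b) := by
  induction l with
  | nil => simp at hm
  | cons q l ih =>
      rcases List.mem_cons.mp hm with rfl | hm'
      · simp [List.find?]
      · have hlt : q.1 < i := (List.pairwise_cons.mp hp).1 _ hm'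
        have : (q.1 == i) = false := by simp [Nat.ne_of_lt hlt]
        rw [List.find?_cons, this]
        exact ih (List.pairwise_cons.mp hp).2 hm'

lemma Lint.itv_eq_some {α : Lint} {i : ℕ} {b : Bool} :
    α.itv i = some b ↔ (i, b) ∈ α.1 := by
  constructor
  · intro h
    simp only [Lint.itv, Option.map_eq_some_iff] at h
    rcases h with ⟨p, hp, hb⟩
    have hmem := List.mem_of_find?_eq_some hp
    have hpred := List.find?_some hp
    simp at hpred
    rcases p with ⟨j, c⟩
    simp at hpred hb
    subst hpred; subst hb
    exact hmem
  · intro h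
    simp only [Lint.itv]
    rw [find_key (lint_pairwise α) h]
    rfl

lemma key_le_maxAtom' {l : List (ℕ × Bool)} {q : ℕ × Bool} (h : q ∈ l) :
    q.1 ≤ (l.map Prod.fst).foldr max 0 := by
  induction l with
  | nil => simp at h
  | cons p l ih =>
      rcases List.mem_cons.mp h with rfl | h'
      · simp only [List.map_cons, List.foldr_cons]
        exact le_max_left _ _
      · simp only [List.map_cons, List.foldr_cons]
        exact le_trans (ih h') (le_max_right _ _)

lemma key_le_maxAtom {α : Lint} {q : ℕ × Bool} (h : q ∈ α.1) : q.1 ≤ α.maxAtom :=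
  key_le_maxAtom' h

lemma Lint.itv_none_gt {α : Lint} {i : ℕ} (h : α.maxAtom < i) : α.itv i = none := by
  cases hi : α.itv i with
  | none => rfl
  | some b =>
      have := key_le_maxAtom (Lint.itv_eq_some.mp hi)
      omega

lemma Lint.itv_injective {α α' : Lint} (h : α.itv = α'.itv) : α = α' := by
  have hmem : ∀ q : ℕ × Bool, q ∈ α.1 ↔ q ∈ α'.1 := by
    intro ⟨i, b⟩
    rw [← Lint.itv_eq_some, ← Lint.itv_eq_some, h]
  have hnd : α.1.Nodup := (lint_pairwise α).imp (fun h => by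
    intro he; rw [he] at h; exact lt_irrefl _ h)
  have hnd' : α'.1.Nodup := (lint_pairwise α').imp (fun h => by
    intro he; rw [he] at h; exact lt_irrefl _ h)
  have hperm : α.1.Perm α'.1 := (List.perm_ext_iff_of_nodup hnd hnd').mpr hmem
  exact Subtype.ext (List.Perm.eq_of_pairwise (fun _ _ _ _ h1 h2 => absurd (lt_trans h1 h2) (lt_irrefl _)) (lint_pairwise α) (lint_pairwise α') hperm)

lemma initTape_toProp (α : Lint) (z : ℕ → Bool) :
    α.toProp.eval (initTape α.itv z) = true := by
  rw [toProp_eval_iff]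
  intro q hq
  have := Lint.itv_eq_some.mpr (show (q.1, q.2) ∈ α.1 from hq)
  simp [initTape, this]


/-! ### Generic machine lemmas -/

lemma mstep_det {T : Machine} (hdet : T.Det) {itv : ℕ → Option Bool} {c c₁ c₂ : Cfg}
    (h1 : MStep T itv c c₁) (h2 : MStep T itv c c₂) : c₁ = c₂ := by
  rcases h1 with ⟨r₁, hr₁, he₁, rfl⟩
  rcases h2 with ⟨r₂, hr₂, he₂, rfl⟩
  have : r₁ = r₂ := hdet r₁ hr₁ r₂ hr₂ (he₁.trans he₂.symm)
  subst this; rfl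

lemma mstep_not_halted {T : Machine} {itv : ℕ → Option Bool} {c c' : Cfg}
    (h : MStep T itv c c') : ¬ Halted T c := by
  rcases h with ⟨r, hr, he, _⟩
  intro hH
  exact hH r hr he

lemma halt_unique {T : Machine} (hdet : T.Det) {itv : ℕ → Option Bool} {c d₁ d₂ : Cfg}
    (h1 : Relation.ReflTransGen (MStep T itv) c d₁) (hh1 : Halted T d₁)
    (h2 : Relation.ReflTransGen (MStep T itv) c d₂) (hh2 : Halted T d₂) : d₁ = d₂ := by
  induction h1 using Relation.ReflTransGen.head_induction_on with
  | refl =>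
      rcases Relation.ReflTransGen.cases_head h2 with rfl | ⟨c', hstep, _⟩
      · rfl
      · exact absurd hh1 (mstep_not_halted hstep)
  | head hstep htail ih =>
      rcases Relation.ReflTransGen.cases_head h2 with rfl | ⟨c'', hstep', htail'⟩
      · exact absurd hh2 (mstep_not_halted hstep)
      · have := mstep_det hdet hstep hstep'
        subst this
        exact ih htail'

lemma outputs_subsingleton {T : Machine} (hdet : T.Det) {itv : ℕ → Option Bool}
    {x y₁ y₂ : ℕ → Bool} (h1 : y₁ ∈ Outputs T itv x) (h2 : y₂ ∈ Outputs T itv x) :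
    y₁ = y₂ := by
  rcases h1 with ⟨c₁, hr1, hh1, rfl⟩
  rcases h2 with ⟨c₂, hr2, hh2, rfl⟩
  rw [halt_unique hdet hr1 hh1 hr2 hh2]

lemma mstep_tape_intervened {T : Machine} {itv : ℕ → Option Bool} {c c' : Cfg}
    (h : MStep T itv c c') {i : ℕ} (hi : itv i ≠ none) : c'.tape i = c.tape i := by
  rcases h with ⟨r, _, _, rfl⟩
  simp only [writeTape]
  split
  · rename_i hnone
    rw [Function.update_apply]
    split
    · rename_i he; subst he; exact absurd hnone hi
    · rfl
  · rfl

lemma rt_tape_intervened {T : Machine} {itv : ℕ → Option Bool} {c c' : Cfg}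
    (h : Relation.ReflTransGen (MStep T itv) c c') {i : ℕ} (hi : itv i ≠ none) :
    c'.tape i = c.tape i := by
  induction h with
  | refl => rfl
  | tail _ hstep ih => rw [mstep_tape_intervened hstep hi, ih]

lemma outputs_intervened {T : Machine} {itv : ℕ → Option Bool} {x y : ℕ → Bool}
    (h : y ∈ Outputs T itv x) {i : ℕ} {b : Bool} (hi : itv i = some b) : y i = b := by
  rcases h with ⟨c, hr, _, rfl⟩
  rw [rt_tape_intervened hr (by simp [hi])]
  simp [initTape, hi]

lemma satGen_toL (O : Lint → Set (ℕ → Bool)) (x : ℕ → Bool) (p : PropForm) :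
    SatGen O x p.toL ↔ p.eval x = true := by
  induction p with
  | atom i => simp [PropForm.toL, SatGen, PropForm.eval]
  | neg q ih => simp [PropForm.toL, SatGen, PropForm.eval, ih]
  | and q r ih1 ih2 => simp [PropForm.toL, SatGen, PropForm.eval, ih1, ih2]
  | or q r ih1 ih2 => simp [PropForm.toL, SatGen, PropForm.eval, ih1, ih2]

lemma empty_det : Machine.Det [] := by intro r hr; simp at hr

lemma empty_totalHalting : Machine.TotalHalting [] := by
  intro α x _
  exact ⟨initTape α.itv x, ⟨0, 0, initTape α.itv x⟩, Relation.ReflTransGen.refl,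
    fun r hr => by simp at hr, rfl⟩

/-! ### Soundness -/

open Classical in
theorem AXdethalt_sound {φ : LForm} (h : AXdethalt φ) :
    ∀ M : CSM, inMdethalt M → M.Sat φ := by
  induction h with
  | @taut ψ ht =>
      intro M _
      rw [CSM.Sat, satGen_iff]
      exact ht _ _
  | @extra ψ he =>
      rintro M ⟨hdet, hhalt⟩
      rcases he with ⟨α, β, rfl⟩ | ⟨α, β, rfl⟩
      · -- F
        show SatGen _ _ (.or (.neg (.neg (.cond α (.neg β)))) (.cond α β))
        by_cases hc : SatGen (fun α => Outputs M.T α.itv M.x) M.x (.cond α (.neg β))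
        · exact Or.inl (fun hn => hn hc)
        · refine Or.inr ?_
          simp only [SatGen] at hc ⊢
          push_neg at hc
          rcases hc with ⟨y, hy, hye⟩
          have hyb : β.eval y = true := by
            revert hye; simp [PropForm.eval]
          intro y' hy'
          rwa [outputs_subsingleton hdet hy' hy]
      · -- D
        show SatGen _ _ (.or (.neg (.cond α β)) (.neg (.cond α (.neg β))))
        by_cases hc : SatGen (fun α => Outputs M.T α.itv M.x) M.x (.cond α β)
        · refine Or.inr ?_
          simp only [SatGen] at hc ⊢
          rcases hhalt α M.x M.fin with ⟨y, hy⟩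
          intro hall
          have h1 := hc y hy
          have h2 := hall y hy
          simp [PropForm.eval, h1] at h2
        · exact Or.inl hc
  | axR α =>
      intro M _
      intro y hy
      rw [toProp_eval_iff]
      intro q hq
      exact outputs_intervened hy (Lint.itv_eq_some.mpr hq)
  | axK α β γ =>
      intro M _
      show SatGen _ _ (.or (.neg (.cond α (β.imp γ))) (.or (.neg (.cond α β)) (.cond α γ)))
      by_cases h1 : SatGen (fun α => Outputs M.T α.itv M.x) M.x (.cond α (β.imp γ))
      · by_cases h2 : SatGen (fun α => Outputs M.T α.itv M.x) M.x (.cond α β)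
        · refine Or.inr (Or.inr ?_)
          intro y hy
          have e1 := h1 y hy
          have e2 := h2 y hy
          simp [PropForm.imp, PropForm.eval, e2] at e1
          exact e1
        · exact Or.inr (Or.inl h2)
      · exact Or.inl h1
  | @mp ψ χ _ _ ih1 ih2 =>
      intro M hM
      rcases ih1 M hM with hn | hc
      · exact absurd (ih2 M hM) hn
      · exact hc
  | @rw α β β' _ ih =>
      intro M hM
      have htaut : ∀ y : ℕ → Bool, (β.imp β').eval y = true := by
        intro y
        set n := (β.imp β').maxAtom with hn
        set x' : ℕ → Bool := fun i => y i && decide (i ≤ n) with hx'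
        have hfin : FinSupp x' := by
          apply Set.Finite.subset (Set.finite_le_nat n)
          intro i hi
          simp only [hx', Set.mem_setOf_eq, Bool.and_eq_true, decide_eq_true_eq] at hi
          exact hi.2
        have hM' : inMdethalt ⟨[], x', hfin⟩ := ⟨empty_det, empty_totalHalting⟩
        have := (satGen_toL _ _ _).mp (ih ⟨[], x', hfin⟩ hM')
        rw [← this]
        symm
        apply PropForm.eval_congr
        intro i hi
        simp [hx', hn, hi]
      rcases Classical.em (SatGen (fun α => Outputs M.T α.itv M.x) M.x (.cond α β)) with hc | hc
      · refine Or.inr ?_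
        intro y hy
        have e1 := hc y hy
        have e2 := htaut y
        simp [PropForm.imp, PropForm.eval, e1] at e2
        exact e2
      · exact Or.inl hc


/-! ### Hilbert-style derivation machinery -/

lemma deriv_of_hyps {e : LForm → Prop} :
    ∀ (l : List LForm) (χ : LForm), (∀ ψ ∈ l, Deriv e ψ) →
      (∀ v w, (∀ ψ ∈ l, ψ.evalA v w = true) → χ.evalA v w = true) → Deriv e χ := by
  intro l
  induction l with
  | nil =>
      intro χ _ h
      exact Deriv.taut (fun v w => h v w (by simp))
  | cons ψ l ih =>
      intro χ hd h
      have h1 : Deriv e (ψ.imp χ) := by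
        apply ih (ψ.imp χ) (fun ψ' h' => hd ψ' (List.mem_cons_of_mem _ h'))
        intro v w hl
        simp only [LForm.imp, LForm.evalA, Bool.or_eq_true, Bool.not_eq_true']
        cases hψ : ψ.evalA v w with
        | false => exact Or.inl rfl
        | true =>
            refine Or.inr (h v w ?_)
            intro ψ' h'
            rcases List.mem_cons.mp h' with rfl | h''
            · exact hψ
            · exact hl _ h''
      exact Deriv.mp h1 (hd ψ (List.mem_cons_self))

lemma derivF (α : Lint) (β : PropForm) :
    AXdethalt ((LForm.dia α β).imp (.cond α β)) :=
  Deriv.extra (Or.inl ⟨α, β, rfl⟩)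

lemma derivD (α : Lint) (β : PropForm) :
    AXdethalt ((LForm.cond α β).imp (LForm.dia α β)) :=
  Deriv.extra (Or.inr ⟨α, β, rfl⟩)

lemma derivRW {β β' : PropForm} (α : Lint) (h : ∀ v, (β.imp β').eval v = true) :
    AXdethalt ((LForm.cond α β).imp (.cond α β')) :=
  Deriv.rw α (Deriv.taut (by intro v w; rw [PropForm.toL_evalA]; exact h v))

lemma iff_evalA {A B : LForm} {v : ℕ → Bool} {w : Lint → PropForm → Bool} :
    (A.iff B).evalA v w = true ↔ A.evalA v w = B.evalA v w := by
  simp only [LForm.iff, LForm.imp, LForm.evalA]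
  cases A.evalA v w <;> cases B.evalA v w <;> simp

lemma deriv_box_and_intro (α : Lint) (β γ : PropForm) :
    AXdethalt ((LForm.cond α β).imp ((LForm.cond α γ).imp (.cond α (β.and γ)))) := by
  apply deriv_of_hyps
    [(LForm.cond α β).imp (.cond α (γ.imp (β.and γ))),
     (LForm.cond α (γ.imp (β.and γ))).imp ((LForm.cond α γ).imp (.cond α (β.and γ)))]
  · intro ψ hψ
    rcases List.mem_cons.mp hψ with rfl | hψ'
    · apply derivRW
      intro v
      simp only [PropForm.imp, PropForm.eval]
      cases β.eval v <;> cases γ.eval v <;> rfl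
    · rcases List.mem_cons.mp hψ' with rfl | h
      · exact Deriv.axK α γ (β.and γ)
      · simp at h
  · intro v w hl
    have h1 := hl _ (List.mem_cons_self)
    have h2 := hl _ (List.mem_cons_of_mem _ (List.mem_cons_self))
    revert h1 h2
    simp only [LForm.imp, LForm.evalA]
    generalize w α β = a
    generalize w α γ = b
    generalize w α (γ.imp (β.and γ)) = cc
    generalize w α (β.and γ) = d
    revert a b cc d
    decide

lemma deriv_negIff (α : Lint) (β : PropForm) :
    AXdethalt ((LForm.cond α β.neg).iff (.neg (.cond α β))) := by
  apply deriv_of_hyps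
    [(LForm.cond α β).imp (LForm.dia α β), (LForm.dia α β).imp (.cond α β)]
  · intro ψ hψ
    rcases List.mem_cons.mp hψ with rfl | hψ'
    · exact derivD α β
    · rcases List.mem_cons.mp hψ' with rfl | h
      · exact derivF α β
      · simp at h
  · intro v w hl
    have h1 := hl _ (List.mem_cons_self)
    have h2 := hl _ (List.mem_cons_of_mem _ (List.mem_cons_self))
    revert h1 h2
    simp only [LForm.imp, LForm.iff, LForm.dia, LForm.evalA]
    generalize w α β = a
    generalize w α β.neg = b
    revert a b
    decide

lemma deriv_andIff (α : Lint) (β γ : PropForm) :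
    AXdethalt ((LForm.cond α (β.and γ)).iff (.and (.cond α β) (.cond α γ))) := by
  apply deriv_of_hyps
    [(LForm.cond α (β.and γ)).imp (.cond α β),
     (LForm.cond α (β.and γ)).imp (.cond α γ),
     (LForm.cond α β).imp ((LForm.cond α γ).imp (.cond α (β.and γ)))]
  · intro ψ hψ
    rcases List.mem_cons.mp hψ with rfl | hψ'
    · apply derivRW
      intro v
      simp only [PropForm.imp, PropForm.eval]
      cases β.eval v <;> cases γ.eval v <;> rfl
    · rcases List.mem_cons.mp hψ' with rfl | hψ''
      · apply derivRW
        intro v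
        simp only [PropForm.imp, PropForm.eval]
        cases β.eval v <;> cases γ.eval v <;> rfl
      · rcases List.mem_cons.mp hψ'' with rfl | h
        · exact deriv_box_and_intro α β γ
        · simp at h
  · intro v w hl
    have h1 := hl _ (List.mem_cons_self)
    have h2 := hl _ (List.mem_cons_of_mem _ (List.mem_cons_self))
    have h3 := hl _ (List.mem_cons_of_mem _ (List.mem_cons_of_mem _ (List.mem_cons_self)))
    revert h1 h2 h3
    simp only [LForm.imp, LForm.iff, LForm.evalA]
    generalize w α (β.and γ) = d
    generalize w α β = a
    generalize w α γ = b
    revert a b d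
    decide

lemma deriv_orIff (α : Lint) (β γ : PropForm) :
    AXdethalt ((LForm.cond α (β.or γ)).iff (.or (.cond α β) (.cond α γ))) := by
  apply deriv_of_hyps
    [(LForm.cond α β).imp (.cond α (β.or γ)),
     (LForm.cond α γ).imp (.cond α (β.or γ)),
     (LForm.cond α γ.neg).iff (.neg (.cond α γ)),
     (LForm.cond α (β.or γ)).imp ((LForm.cond α γ.neg).imp (.cond α ((β.or γ).and γ.neg))),
     (LForm.cond α ((β.or γ).and γ.neg)).imp (.cond α β)]
  · intro ψ hψ
    rcases List.mem_cons.mp hψ with rfl | hψ'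
    · apply derivRW
      intro v
      simp only [PropForm.imp, PropForm.eval]
      cases β.eval v <;> cases γ.eval v <;> rfl
    · rcases List.mem_cons.mp hψ' with rfl | hψ''
      · apply derivRW
        intro v
        simp only [PropForm.imp, PropForm.eval]
        cases β.eval v <;> cases γ.eval v <;> rfl
      · rcases List.mem_cons.mp hψ'' with rfl | hψ3
        · exact deriv_negIff α γ
        · rcases List.mem_cons.mp hψ3 with rfl | hψ4
          · exact deriv_box_and_intro α (β.or γ) γ.neg
          · rcases List.mem_cons.mp hψ4 with rfl | h
            · apply derivRW
              intro v
              simp only [PropForm.imp, PropForm.eval]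
              cases β.eval v <;> cases γ.eval v <;> rfl
            · simp at h
  · intro v w hl
    have h1 := hl _ (List.mem_cons_self)
    have h2 := hl _ (List.mem_cons_of_mem _ (List.mem_cons_self))
    have h3 := hl _ (List.mem_cons_of_mem _ (List.mem_cons_of_mem _ (List.mem_cons_self)))
    have h4 := hl _ (List.mem_cons_of_mem _ (List.mem_cons_of_mem _
      (List.mem_cons_of_mem _ (List.mem_cons_self))))
    have h5 := hl _ (List.mem_cons_of_mem _ (List.mem_cons_of_mem _
      (List.mem_cons_of_mem _ (List.mem_cons_of_mem _ (List.mem_cons_self)))))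
    revert h1 h2 h3 h4 h5
    simp only [LForm.imp, LForm.iff, LForm.evalA]
    generalize w α (β.or γ) = a
    generalize w α β = b
    generalize w α γ = cc
    generalize w α γ.neg = d
    generalize w α ((β.or γ).and γ.neg) = ee
    revert a b cc d ee
    decide

/-- Decomposition hypothesis for a conditional atom. -/
def decompHyp (α : Lint) : PropForm → LForm
  | .atom i => (LForm.cond α (.atom i)).iff (.cond α (.atom i))
  | .neg γ => (LForm.cond α γ.neg).iff (.neg (.cond α γ))
  | .and γ δ => (LForm.cond α (γ.and δ)).iff (.and (.cond α γ) (.cond α δ))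
  | .or γ δ => (LForm.cond α (γ.or δ)).iff (.or (.cond α γ) (.cond α δ))

lemma deriv_decompHyp (α : Lint) (γ : PropForm) : AXdethalt (decompHyp α γ) := by
  cases γ with
  | atom i =>
      apply Deriv.taut
      intro v w
      show (LForm.iff _ _).evalA v w = true
      rw [iff_evalA]
  | neg γ => exact deriv_negIff α γ
  | and γ δ => exact deriv_andIff α γ δ
  | or γ δ => exact deriv_orIff α γ δ

def PropForm.subs : PropForm → List PropForm
  | .atom i => [.atom i]
  | .neg γ => .neg γ :: γ.subs
  | .and γ δ => .and γ δ :: (γ.subs ++ δ.subs)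
  | .or γ δ => .or γ δ :: (γ.subs ++ δ.subs)

lemma key_claim (α : Lint) (v : ℕ → Bool) (w : Lint → PropForm → Bool) (γ : PropForm)
    (hh : ∀ δ ∈ γ.subs, (decompHyp α δ).evalA v w = true) :
    w α γ = γ.eval (fun i => w α (.atom i)) := by
  induction γ with
  | atom i => rfl
  | neg γ ih =>
      have h := iff_evalA.mp (hh _ (List.mem_cons_self))
      simp only [LForm.evalA] at h
      rw [PropForm.eval, ← ih (fun δ hδ => hh δ (List.mem_cons_of_mem _ hδ))]
      exact h
  | and γ δ ih1 ih2 =>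
      have h := iff_evalA.mp (hh _ (List.mem_cons_self))
      simp only [LForm.evalA] at h
      rw [PropForm.eval,
        ← ih1 (fun δ' hδ => hh δ' (List.mem_cons_of_mem _ (List.mem_append_left _ hδ))),
        ← ih2 (fun δ' hδ => hh δ' (List.mem_cons_of_mem _ (List.mem_append_right _ hδ)))]
      exact h
  | or γ δ ih1 ih2 =>
      have h := iff_evalA.mp (hh _ (List.mem_cons_self))
      simp only [LForm.evalA] at h
      rw [PropForm.eval,
        ← ih1 (fun δ' hδ => hh δ' (List.mem_cons_of_mem _ (List.mem_append_left _ hδ))),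
        ← ih2 (fun δ' hδ => hh δ' (List.mem_cons_of_mem _ (List.mem_append_right _ hδ)))]
      exact h

/-- The hypotheses used in the completeness argument. -/
def hypsFor (φ : LForm) : List LForm :=
  φ.ants.flatMap fun α =>
    LForm.cond α α.toProp ::
      ((α.toProp :: φ.conds.map Prod.snd).flatMap PropForm.subs).map (decompHyp α)

lemma hypsFor_deriv (φ : LForm) : ∀ ψ ∈ hypsFor φ, AXdethalt ψ := by
  intro ψ hψ
  simp only [hypsFor, List.mem_flatMap, List.mem_cons, List.mem_map] at hψ
  rcases hψ with ⟨α, _, rfl | ⟨δ, _, rfl⟩⟩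
  · exact Deriv.axR α
  · exact deriv_decompHyp α δ


/-! ### The canonical deterministic, total machine -/

inductive St : Type where
  | scan (i : ℕ) (s : List (Bool × Bool))
  | back (i : ℕ) (s : List (Bool × Bool)) (b : Bool)
  | check (i : ℕ) (s : List (Bool × Bool)) (b : Bool)
  | write (j : ℕ) (o : List Bool)
  | done
  deriving DecidableEq

def encB (b : Bool) : ℕ := cond b 1 0

lemma encB_inj : Function.Injective encB := by
  intro a b h; cases a <;> cases b <;> simp [encB] at h ⊢

def encBL : List Bool → ℕ
  | [] => 0
  | b :: l => Nat.pair (encB b) (encBL l) + 1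

lemma encBL_inj : Function.Injective encBL := by
  intro l₁
  induction l₁ with
  | nil => intro l₂ h; cases l₂ with
      | nil => rfl
      | cons b l => simp [encBL] at h
  | cons b l ih =>
      intro l₂ h
      cases l₂ with
      | nil => simp [encBL] at h
      | cons b' l' =>
          simp only [encBL, Nat.add_right_cancel_iff, Nat.pair_eq_pair] at h
          rw [encB_inj h.1, ih h.2]

def encP (p : Bool × Bool) : ℕ := encB p.1 + 2 * encB p.2

lemma encP_inj : Function.Injective encP := by
  intro ⟨a, b⟩ ⟨a', b'⟩ h
  revert h; revert a b a' b'; decide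

def encPL : List (Bool × Bool) → ℕ
  | [] => 0
  | p :: l => Nat.pair (encP p) (encPL l) + 1

lemma encPL_inj : Function.Injective encPL := by
  intro l₁
  induction l₁ with
  | nil => intro l₂ h; cases l₂ with
      | nil => rfl
      | cons b l => simp [encPL] at h
  | cons b l ih =>
      intro l₂ h
      cases l₂ with
      | nil => simp [encPL] at h
      | cons b' l' =>
          simp only [encPL, Nat.add_right_cancel_iff, Nat.pair_eq_pair] at h
          rw [encP_inj h.1, ih h.2]

def encSt : St → ℕ
  | .scan i s => 5 * Nat.pair i (encPL s)
  | .back i s b => 5 * Nat.pair i (Nat.pair (encPL s) (encB b)) + 1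
  | .check i s b => 5 * Nat.pair i (Nat.pair (encPL s) (encB b)) + 2
  | .write j o => 5 * Nat.pair j (encBL o) + 3
  | .done => 4

lemma encSt_inj : Function.Injective encSt := by
  intro s₁ s₂ h
  cases s₁ <;> cases s₂ <;> simp only [encSt] at h <;>
    first
      | rfl
      | omega
      | (rename_i a₁ b₁ a₂ b₂
         have hp : Nat.pair a₁ (encPL b₁) = Nat.pair a₂ (encPL b₂) := by omega
         rw [Nat.pair_eq_pair] at hp
         rw [hp.1, encPL_inj hp.2])
      | (rename_i a₁ b₁ c₁ a₂ b₂ c₂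
         have hp : Nat.pair a₁ (Nat.pair (encPL b₁) (encB c₁)) =
             Nat.pair a₂ (Nat.pair (encPL b₂) (encB c₂)) := by omega
         rw [Nat.pair_eq_pair, Nat.pair_eq_pair] at hp
         rw [hp.1, encPL_inj hp.2.1, encB_inj hp.2.2])
      | (rename_i a₁ b₁ a₂ b₂
         have hp : Nat.pair a₁ (encBL b₁) = Nat.pair a₂ (encBL b₂) := by omega
         rw [Nat.pair_eq_pair] at hp
         rw [hp.1, encBL_inj hp.2])

section TheMachine

variable (N : ℕ) (A : List Lint) (t : Lint → ℕ → Bool)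

def matchb (s : List (Bool × Bool)) (α : Lint) : Bool :=
  (List.range (N + 1)).all fun i =>
    ((s.getD i (false, false)).2 == (α.itv i).isSome) &&
      (match α.itv i with
       | some b => (s.getD i (false, false)).1 == b
       | none => true)

def decideOut (s : List (Bool × Bool)) : List Bool :=
  match A.find? (matchb N s) with
  | some α => (List.range (N + 1)).map (t α)
  | none => s.map Prod.fst

def tmStep (st : St) (rd : Bool) : ℕ × Bool × Bool :=
  match st with
  | .scan i s =>
      if i < N + 1 then (encSt (.back i s rd), !rd, true)
      else (encSt (.write N (decideOut N A t s)), rd, false)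
  | .back i s b => (encSt (.check i s b), rd, false)
  | .check i s b => (encSt (.scan (i + 1) (s ++ [(b, rd == b)])), b, true)
  | .write j o =>
      if j = 0 then (encSt .done, o.getD 0 false, true)
      else (encSt (.write (j - 1) o), o.getD j false, false)
  | .done => (0, rd, true)

def allLists {σ : Type} (xs : List σ) : ℕ → List (List σ)
  | 0 => [[]]
  | n + 1 => xs.flatMap fun x => (allLists xs n).map (x :: ·)

lemma mem_allLists {σ : Type} {xs : List σ} :
    ∀ {n : ℕ} {l : List σ}, l.length = n → (∀ x ∈ l, x ∈ xs) → l ∈ allLists xs n := by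
  intro n
  induction n with
  | zero => intro l hl _; rw [List.length_eq_zero_iff] at hl; simp [hl, allLists]
  | succ n ih =>
      intro l hl hx
      cases l with
      | nil => simp at hl
      | cons a l' =>
          simp only [allLists, List.mem_flatMap, List.mem_map]
          exact ⟨a, hx a (List.mem_cons_self),
            l', ih (by simpa using hl) (fun x hx' => hx x (List.mem_cons_of_mem _ hx')), rfl⟩

def stEnum : List St :=
  ((List.range (N + 2)).flatMap fun i => (allLists [(false,false),(false,true),(true,false),(true,true)] i).map (St.scan i)) ++
  ((List.range (N + 1)).flatMap fun i =>
    (allLists [(false,false),(false,true),(true,false),(true,true)] i).flatMap fun s =>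
      [St.back i s false, St.back i s true, St.check i s false, St.check i s true]) ++
  ((List.range (N + 1)).flatMap fun j => (allLists [false, true] (N + 1)).map (St.write j))

lemma mem_allPairs (p : Bool × Bool) :
    p ∈ [(false,false),(false,true),(true,false),(true,true)] := by
  rcases p with ⟨a, b⟩; cases a <;> cases b <;> simp

lemma scan_mem_enum {i : ℕ} {s : List (Bool × Bool)} (hi : i ≤ N + 1)
    (hs : s.length = i) : St.scan i s ∈ stEnum N := by
  apply List.mem_append_left
  apply List.mem_append_left
  simp only [List.mem_flatMap, List.mem_range, List.mem_map]
  exact ⟨i, by omega, s, mem_allLists hs (fun x _ => mem_allPairs x), rfl⟩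

lemma back_mem_enum {i : ℕ} {s : List (Bool × Bool)} {b : Bool} (hi : i ≤ N)
    (hs : s.length = i) : St.back i s b ∈ stEnum N := by
  apply List.mem_append_left
  apply List.mem_append_right
  simp only [List.mem_flatMap, List.mem_range]
  refine ⟨i, by omega, s, mem_allLists hs (fun x _ => mem_allPairs x), ?_⟩
  cases b <;> simp

lemma check_mem_enum {i : ℕ} {s : List (Bool × Bool)} {b : Bool} (hi : i ≤ N)
    (hs : s.length = i) : St.check i s b ∈ stEnum N := by
  apply List.mem_append_left
  apply List.mem_append_right
  simp only [List.mem_flatMap, List.mem_range]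
  refine ⟨i, by omega, s, mem_allLists hs (fun x _ => mem_allPairs x), ?_⟩
  cases b <;> simp

lemma write_mem_enum {j : ℕ} {o : List Bool} (hj : j ≤ N)
    (ho : o.length = N + 1) : St.write j o ∈ stEnum N := by
  apply List.mem_append_right
  simp only [List.mem_flatMap, List.mem_range, List.mem_map]
  refine ⟨j, by omega, o, mem_allLists ho (fun x _ => by cases x <;> simp), rfl⟩

lemma done_not_mem_enum : St.done ∉ stEnum N := by
  intro h
  simp only [stEnum, List.mem_append, List.mem_flatMap, List.mem_range, List.mem_map] at h
  rcases h with (⟨i, _, s, _, h⟩ | ⟨i, _, s, _, h⟩) | ⟨j, _, o, _, h⟩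
  · exact absurd h (by simp)
  · simp at h
  · exact absurd h (by simp)

def TM : Machine :=
  (stEnum N).flatMap fun st =>
    [((encSt st, true), tmStep N A t st true), ((encSt st, false), tmStep N A t st false)]

lemma mem_TM {r : Rule} :
    r ∈ TM N A t ↔ ∃ st ∈ stEnum N, ∃ rd : Bool, r = ((encSt st, rd), tmStep N A t st rd) := by
  simp only [TM, List.mem_flatMap, List.mem_cons, List.mem_singleton]
  constructor
  · rintro ⟨st, hst, rfl | (rfl | h)⟩
    · exact ⟨st, hst, true, rfl⟩
    · exact ⟨st, hst, false, rfl⟩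
    · simp at h
  · rintro ⟨st, hst, rd, rfl⟩
    cases rd
    · exact ⟨st, hst, Or.inr (Or.inl rfl)⟩
    · exact ⟨st, hst, Or.inl rfl⟩

lemma TM_det : (TM N A t).Det := by
  intro r₁ h₁ r₂ h₂ heq
  rcases (mem_TM N A t).mp h₁ with ⟨st₁, _, rd₁, rfl⟩
  rcases (mem_TM N A t).mp h₂ with ⟨st₂, _, rd₂, rfl⟩
  simp only [Prod.mk.injEq] at heq
  obtain ⟨h1, h2⟩ := heq
  rw [encSt_inj h1, h2]

lemma halted_done (itv : ℕ → Option Bool) (p : ℕ) (tp : ℕ → Bool) :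
    Halted (TM N A t) ⟨encSt .done, p, tp⟩ := by
  intro r hr heq
  rcases (mem_TM N A t).mp hr with ⟨st, hst, rd, rfl⟩
  simp only [Prod.mk.injEq] at heq
  rw [encSt_inj heq.1] at hst
  exact done_not_mem_enum N hst

lemma tm_step_mstep {st : St} (hst : st ∈ stEnum N) (itv : ℕ → Option Bool)
    (p : ℕ) (tp : ℕ → Bool) :
    MStep (TM N A t) itv ⟨encSt st, p, tp⟩
      ⟨(tmStep N A t st (tp p)).1, movePos p (tmStep N A t st (tp p)).2.2,
        writeTape itv tp p (tmStep N A t st (tp p)).2.1⟩ :=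
  ⟨((encSt st, tp p), tmStep N A t st (tp p)),
    (mem_TM N A t).mpr ⟨st, hst, tp p, rfl⟩, rfl, rfl⟩

lemma writeTape_self (itv : ℕ → Option Bool) (tp : ℕ → Bool) (p : ℕ) :
    writeTape itv tp p (tp p) = tp := by
  unfold writeTape
  split
  · exact Function.update_eq_self p tp
  · rfl

end TheMachine


section TheRun

variable (N : ℕ) (A : List Lint) (t : Lint → ℕ → Bool)

lemma cell_run (itv : ℕ → Option Bool) (tp : ℕ → Bool) {i : ℕ} (hi : i ≤ N)
    {s : List (Bool × Bool)} (hs : s.length = i) :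
    Relation.ReflTransGen (MStep (TM N A t) itv)
      ⟨encSt (.scan i s), i, tp⟩
      ⟨encSt (.scan (i + 1) (s ++ [(tp i, (itv i).isSome)])), i + 1, tp⟩ := by
  set b := tp i with hb
  set tp₁ := writeTape itv tp i (!b) with htp₁
  -- step 1
  have h1 : MStep (TM N A t) itv ⟨encSt (.scan i s), i, tp⟩
      ⟨encSt (.back i s b), i + 1, tp₁⟩ := by
    have := tm_step_mstep N A t (scan_mem_enum N (by omega) hs) itv i tp
    simpa [tmStep, if_pos (by omega : i ≤ N), movePos, ← hb, ← htp₁] using this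
  -- step 2
  have h2 : MStep (TM N A t) itv ⟨encSt (.back i s b), i + 1, tp₁⟩
      ⟨encSt (.check i s b), i, tp₁⟩ := by
    have := tm_step_mstep N A t (st := .back i s b) (back_mem_enum N hi hs) itv (i + 1) tp₁
    simpa [tmStep, movePos, writeTape_self] using this
  -- step 3
  have h3 : MStep (TM N A t) itv ⟨encSt (.check i s b), i, tp₁⟩
      ⟨encSt (.scan (i + 1) (s ++ [(b, tp₁ i == b)])), i + 1, writeTape itv tp₁ i b⟩ := by
    have := tm_step_mstep N A t (st := .check i s b) (check_mem_enum N hi hs) itv i tp₁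
    simpa [tmStep, movePos] using this
  have key : (tp₁ i == b) = (itv i).isSome ∧ writeTape itv tp₁ i b = tp := by
    cases hitv : itv i with
    | none =>
        have htp₁' : tp₁ = Function.update tp i (!b) := by
          rw [htp₁]; unfold writeTape; rw [if_pos hitv]
        constructor
        · rw [htp₁', Function.update_self]
          cases b <;> rfl
        · rw [htp₁']
          unfold writeTape
          rw [if_pos hitv, Function.update_idem, hb, Function.update_eq_self]
    | some c =>
        have htp₁' : tp₁ = tp := by
          rw [htp₁]; unfold writeTape; rw [if_neg (by simp [hitv])]
        constructor
        · rw [htp₁', ← hb]; simp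
        · rw [htp₁']; unfold writeTape
          rw [if_neg (by simp [hitv])]
  rw [key.1, key.2] at h3
  exact Relation.ReflTransGen.head h1 (Relation.ReflTransGen.head h2
    (Relation.ReflTransGen.single h3))

def infoL (itv : ℕ → Option Bool) (tp : ℕ → Bool) (k : ℕ) : List (Bool × Bool) :=
  (List.range k).map fun i => (tp i, (itv i).isSome)

lemma scan_run (itv : ℕ → Option Bool) (tp : ℕ → Bool) :
    ∀ k, k ≤ N + 1 →
      Relation.ReflTransGen (MStep (TM N A t) itv)
        ⟨encSt (.scan 0 []), 0, tp⟩ ⟨encSt (.scan k (infoL itv tp k)), k, tp⟩ := by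
  intro k
  induction k with
  | zero =>
      intro _
      simp only [infoL, List.range_zero, List.map_nil]
      exact Relation.ReflTransGen.refl
  | succ k ih =>
      intro hk
      refine Relation.ReflTransGen.trans (ih (by omega)) ?_
      have := cell_run N A t itv tp (show k ≤ N by omega)
        (show (infoL itv tp k).length = k by simp [infoL])
      have hrange : infoL itv tp k ++ [(tp k, (itv k).isSome)] = infoL itv tp (k + 1) := by
        simp [infoL, List.range_succ]
      rwa [hrange] at this

lemma turn_run (itv : ℕ → Option Bool) (tp : ℕ → Bool) {s : List (Bool × Bool)}
    (hs : s.length = N + 1) :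
    MStep (TM N A t) itv ⟨encSt (.scan (N + 1) s), N + 1, tp⟩
      ⟨encSt (.write N (decideOut N A t s)), N, tp⟩ := by
  have := tm_step_mstep N A t (scan_mem_enum N le_rfl hs) itv (N + 1) tp
  simpa [tmStep, movePos, writeTape_self] using this

def wtape (itv : ℕ → Option Bool) (o : List Bool) (j : ℕ) (tp : ℕ → Bool) : ℕ → Bool :=
  fun i => if i ≤ j ∧ itv i = none then o.getD i false else tp i

lemma write_run (itv : ℕ → Option Bool) {o : List Bool} (ho : o.length = N + 1) :
    ∀ j, j ≤ N → ∀ tp : ℕ → Bool,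
      Relation.ReflTransGen (MStep (TM N A t) itv)
        ⟨encSt (.write j o), j, tp⟩ ⟨encSt .done, 1, wtape itv o j tp⟩ := by
  intro j
  induction j with
  | zero =>
      intro _ tp
      have hstep := tm_step_mstep N A t (st := .write 0 o)
        (write_mem_enum N (Nat.zero_le N) ho) itv 0 tp
      simp only [tmStep, reduceIte, movePos, if_true] at hstep
      have ht : writeTape itv tp 0 (o.getD 0 false) = wtape itv o 0 tp := by
        funext i
        unfold writeTape wtape
        by_cases hn : itv 0 = none
        · rw [if_pos hn]
          by_cases hi0 : i = 0
          · subst hi0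
            rw [Function.update_self, if_pos ⟨le_rfl, hn⟩]
          · rw [Function.update_of_ne hi0, if_neg (fun h => hi0 (Nat.le_zero.mp h.1))]
        · rw [if_neg hn]
          by_cases hi0 : i = 0
          · subst hi0
            rw [if_neg (fun h => hn h.2)]
          · rw [if_neg (fun h => hi0 (Nat.le_zero.mp h.1))]
      rw [ht] at hstep
      exact Relation.ReflTransGen.single hstep
  | succ j ih =>
      intro hj tp
      have hstep := tm_step_mstep N A t (st := .write (j + 1) o)
        (write_mem_enum N (by omega) ho) itv (j + 1) tp
      simp only [tmStep, Nat.succ_ne_zero, reduceIte, movePos, Bool.false_eq_true,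
        Nat.add_sub_cancel, if_false] at hstep
      have hmid := ih (by omega) (writeTape itv tp (j + 1) (o.getD (j + 1) false))
      have heq : wtape itv o j (writeTape itv tp (j + 1) (o.getD (j + 1) false)) =
          wtape itv o (j + 1) tp := by
        funext i
        by_cases h1 : i ≤ j ∧ itv i = none
        · simp only [wtape, if_pos h1, if_pos (show i ≤ j + 1 ∧ itv i = none from
            ⟨by omega, h1.2⟩)]
        · simp only [wtape, if_neg h1]
          by_cases hij : i = j + 1
          · subst hij
            by_cases hn : itv (j + 1) = none
            · simp [writeTape, hn, Function.update_self]
            · simp [writeTape, hn]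
          · have hno : ¬ (i ≤ j + 1 ∧ itv i = none) := by
              intro h
              exact h1 ⟨by omega, h.2⟩
            rw [if_neg hno]
            by_cases hn : itv (j + 1) = none
            · simp [writeTape, hn, Function.update_of_ne hij]
            · simp [writeTape, hn]
      rw [heq] at hmid
      exact Relation.ReflTransGen.head hstep hmid


def finalTape (itv : ℕ → Option Bool) (tp : ℕ → Bool) : ℕ → Bool :=
  wtape itv (decideOut N A t (infoL itv tp (N + 1))) N tp

lemma decideOut_length {s : List (Bool × Bool)} (hs : s.length = N + 1) :
    (decideOut N A t s).length = N + 1 := by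
  unfold decideOut
  cases A.find? (matchb N s) <;> simp [hs]

lemma tm_run (itv : ℕ → Option Bool) (tp : ℕ → Bool) :
    Relation.ReflTransGen (MStep (TM N A t) itv) ⟨0, 0, tp⟩
      ⟨encSt .done, 1, finalTape N A t itv tp⟩ := by
  have h0 : (0 : ℕ) = encSt (.scan 0 []) := by decide
  rw [h0]
  refine Relation.ReflTransGen.trans (scan_run N A t itv tp (N + 1) le_rfl) ?_
  refine Relation.ReflTransGen.head (turn_run N A t itv tp (by simp [infoL])) ?_
  exact write_run N A t itv (decideOut_length N A t (by simp [infoL])) N le_rfl tp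

lemma TM_totalHalting : (TM N A t).TotalHalting := by
  intro α x _
  exact ⟨finalTape N A t α.itv (initTape α.itv x),
    ⟨encSt .done, 1, finalTape N A t α.itv (initTape α.itv x)⟩,
    tm_run N A t α.itv (initTape α.itv x), halted_done N A t α.itv 1 _, rfl⟩

lemma tm_outputs (itv : ℕ → Option Bool) (x : ℕ → Bool) :
    ∀ z ∈ Outputs (TM N A t) itv x, z = finalTape N A t itv (initTape itv x) := by
  intro z hz
  exact outputs_subsingleton (TM_det N A t) hz
    ⟨⟨encSt .done, 1, finalTape N A t itv (initTape itv x)⟩,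
      tm_run N A t itv (initTape itv x), halted_done N A t itv 1 _, rfl⟩

lemma infoL_getD {itv : ℕ → Option Bool} {tp : ℕ → Bool} {i : ℕ} (h : i < N + 1) :
    (infoL itv tp (N + 1)).getD i (false, false) = (tp i, (itv i).isSome) := by
  rw [List.getD_eq_getElem _ _ (by simpa [infoL] using h)]
  simp [infoL]

lemma matchb_self {α : Lint} {tp : ℕ → Bool}
    (htp : ∀ i b, α.itv i = some b → tp i = b) :
    matchb N (infoL α.itv tp (N + 1)) α = true := by
  simp only [matchb, List.all_eq_true, List.mem_range]
  intro i hi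
  rw [infoL_getD N hi]
  cases h : α.itv i with
  | none => simp
  | some b => simp [htp i b h]

lemma matchb_itv_eq {α α' : Lint} (hN : α.maxAtom ≤ N) (hN' : α'.maxAtom ≤ N)
    {tp : ℕ → Bool} (htp : ∀ i b, α.itv i = some b → tp i = b)
    (hm : matchb N (infoL α.itv tp (N + 1)) α' = true) : α' = α := by
  apply Lint.itv_injective
  funext i
  by_cases hi : i < N + 1
  · simp only [matchb, List.all_eq_true, List.mem_range] at hm
    have := hm i hi
    rw [infoL_getD N hi] at this
    simp only [Bool.and_eq_true, beq_iff_eq] at this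
    cases h : α.itv i with
    | none =>
        cases h' : α'.itv i with
        | none => rfl
        | some b' =>
            rw [h, h'] at this
            simp at this
    | some b =>
        cases h' : α'.itv i with
        | none =>
            rw [h, h'] at this
            simp at this
        | some b' =>
            rw [h, h'] at this
            simp only [Option.isSome_some, beq_iff_eq, true_and] at this
            rw [htp i b h] at this
            rw [this]
  · rw [Lint.itv_none_gt (by omega : α.maxAtom < i),
      Lint.itv_none_gt (by omega : α'.maxAtom < i)]

lemma decideOut_self {α : Lint} (hα : α ∈ A) (hbnd : ∀ α' ∈ A, α'.maxAtom ≤ N)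
    {tp : ℕ → Bool} (htp : ∀ i b, α.itv i = some b → tp i = b) :
    decideOut N A t (infoL α.itv tp (N + 1)) = (List.range (N + 1)).map (t α) := by
  unfold decideOut
  cases hf : A.find? (matchb N (infoL α.itv tp (N + 1))) with
  | none =>
      exfalso
      have := List.find?_eq_none.mp hf α hα
      exact this (matchb_self N htp)
  | some α₀ =>
      have hm := List.find?_some hf
      have hmem := List.mem_of_find?_eq_some hf
      rw [matchb_itv_eq N (hbnd α hα) (hbnd α₀ hmem) htp hm]

lemma tm_output_val {α : Lint} (hα : α ∈ A) (hbnd : ∀ α' ∈ A, α'.maxAtom ≤ N)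
    (ht : ∀ q ∈ α.1, t α q.1 = q.2) (x : ℕ → Bool)
    {z : ℕ → Bool} (hz : z ∈ Outputs (TM N A t) α.itv x) :
    ∀ i ≤ N, z i = t α i := by
  have hz' := tm_outputs N A t α.itv x z hz
  set tp := initTape α.itv x with htpdef
  have htp : ∀ i b, α.itv i = some b → tp i = b := fun i b h => by
    simp [htpdef, initTape, h]
  intro i hi
  rw [hz']
  unfold finalTape wtape
  cases hiv : α.itv i with
  | none =>
      rw [if_pos ⟨hi, rfl⟩, decideOut_self N A t hα hbnd htp,
        List.getD_eq_getElem _ _ (by simpa using by omega : i < ((List.range (N + 1)).map (t α)).length)]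
      simp
  | some b =>
      rw [if_neg (fun h => by simp [hiv] at h)]
      rw [htp i b hiv, ht (i, b) (Lint.itv_eq_some.mp hiv)]

end TheRun



/-! ### Completeness -/

lemma mem_ants_maxAtom {φ : LForm} {α : Lint} (h : α ∈ φ.ants) :
    α.maxAtom ≤ φ.maxAtom := by
  induction φ with
  | atom i => simp [LForm.ants] at h
  | cond α' β =>
      simp [LForm.ants] at h
      subst h; simp [LForm.maxAtom]
  | neg ψ ih => exact ih h
  | and ψ χ ih1 ih2 =>
      simp only [LForm.ants, List.mem_append] at h
      rcases h with h | h
      · exact le_trans (ih1 h) (le_max_left _ _)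
      · exact le_trans (ih2 h) (le_max_right _ _)
  | or ψ χ ih1 ih2 =>
      simp only [LForm.ants, List.mem_append] at h
      rcases h with h | h
      · exact le_trans (ih1 h) (le_max_left _ _)
      · exact le_trans (ih2 h) (le_max_right _ _)

open Classical in
theorem sel_valid (φ : LForm) (H : ∀ M : CSM, inMdethalt M → M.Sat φ)
    (v : ℕ → Bool) (y : Lint → ℕ → Bool) (hy : ∀ α : Lint, α.toProp.eval (y α) = true) :
    φ.evalA v (fun α β => β.eval (y α)) = true := by
  set N := φ.maxAtom with hN
  set A := φ.ants with hA
  set x : ℕ → Bool := fun i => v i && decide (i ≤ N) with hx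
  have hfin : FinSupp x := by
    apply Set.Finite.subset (Set.finite_le_nat N)
    intro i hi
    simp only [hx, Set.mem_setOf_eq, Bool.and_eq_true, decide_eq_true_eq] at hi
    exact hi.2
  have hsat := H ⟨TM N A y, x, hfin⟩ ⟨TM_det N A y, TM_totalHalting N A y⟩
  rw [CSM.Sat, satGen_iff] at hsat
  rw [← hsat]
  apply LForm.evalA_congr
  · intro i hi
    simp [hx, hi, hN]
  · intro q hq
    have hαA : q.1 ∈ A := mem_conds_ants hq
    have hbnd : ∀ α' ∈ A, α'.maxAtom ≤ N := fun α' h' => mem_ants_maxAtom h'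
    have ht : ∀ p ∈ q.1.1, y q.1 p.1 = p.2 := (toProp_eval_iff q.1 (y q.1)).mp (hy q.1)
    have hout : ∀ z ∈ Outputs (TM N A y) q.1.itv x, ∀ i ≤ N, z i = y q.1 i :=
      fun z hz => tm_output_val N A y hαA hbnd ht x hz
    have hβN : q.2.maxAtom ≤ N := (mem_conds_maxAtom hq).2
    obtain ⟨z0, hz0⟩ := TM_totalHalting N A y q.1 x hfin
    have hzeq : ∀ z ∈ Outputs (TM N A y) q.1.itv x, q.2.eval z = q.2.eval (y q.1) :=
      fun z hz => PropForm.eval_congr (fun i hi => hout z hz i (le_trans hi hβN))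
    show q.2.eval (y q.1) =
      decide (∀ z ∈ Outputs (TM N A y) q.1.itv x, q.2.eval z = true)
    cases hb : q.2.eval (y q.1) with
    | true =>
        exact (decide_eq_true (fun z hz => by rw [hzeq z hz, hb])).symm
    | false =>
        symm
        apply decide_eq_false
        intro hall
        have h1 := hall z0 hz0
        rw [hzeq z0 hz0, hb] at h1
        exact Bool.noConfusion h1

open Classical in
theorem AXdethalt_complete {φ : LForm} (H : ∀ M : CSM, inMdethalt M → M.Sat φ) :
    AXdethalt φ := by
  apply deriv_of_hyps (hypsFor φ) φ (hypsFor_deriv φ)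
  intro v w hl
  set y : Lint → ℕ → Bool := fun α =>
    if α ∈ φ.ants then (fun i => w α (.atom i)) else initTape α.itv (fun _ => false)
    with hydef
  have hyants : ∀ α ∈ φ.ants, y α = fun i => w α (.atom i) := by
    intro α hα
    rw [hydef]
    simp only [if_pos hα]
  have hclaim : ∀ α ∈ φ.ants, ∀ γ ∈ (α.toProp :: φ.conds.map Prod.snd),
      w α γ = γ.eval (y α) := by
    intro α hα γ hγ
    rw [hyants α hα]
    apply key_claim
    intro δ hδ
    apply hl
    have hmem : δ ∈ ((α.toProp :: φ.conds.map Prod.snd).flatMap PropForm.subs) :=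
      List.mem_flatMap.mpr ⟨γ, hγ, hδ⟩
    exact List.mem_flatMap.mpr ⟨α, hα,
      List.mem_cons_of_mem _ (List.mem_map.mpr ⟨δ, hmem, rfl⟩)⟩
  have hy : ∀ α : Lint, α.toProp.eval (y α) = true := by
    intro α
    by_cases hα : α ∈ φ.ants
    · rw [← hclaim α hα α.toProp (List.mem_cons_self)]
      exact hl (LForm.cond α α.toProp)
        (List.mem_flatMap.mpr ⟨α, hα, List.mem_cons_self⟩)
    · rw [hydef]
      simp only [if_neg hα]
      exact initTape_toProp α _
  have hsel := sel_valid φ H v y hy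
  rw [← hsel]
  apply LForm.evalA_congr (fun i _ => rfl)
  intro q hq
  exact hclaim q.1 (mem_conds_ants hq) q.2
    (List.mem_cons_of_mem _ (List.mem_map.mpr ⟨q, hq, rfl⟩))

/-- Soundness and completeness of `AX↓_det` for `M↓_det`: an
`L`-formula is a theorem of `AX↓_det` iff it is true in every model whose machine
is deterministic and halts on every input tape under every intervention. -/
theorem AXdethalt_sound_complete :
    ∀ φ : LForm, AXdethalt φ ↔ ∀ M : CSM, inMdethalt M → M.Sat φ :=
  fun _ => ⟨fun h => AXdethalt_sound h, fun H => AXdethalt_complete H⟩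

end CausalSim
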